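/- For p > 1 and s ∈ [0,1], define V_s : ℝ^n → ℝ^n by V_s(z) = (s² + |z|²)^{(p−2)/4} z. Then there exists a constant c_V depending only on n and p such that for all ξ₁, ξ₂ ∈ ℝ^n not both zero when s = 0, (1/c_V) |ξ₁ − ξ₂|² ≤ |V_s(ξ₁) − V_s(ξ₂)|² / (s² + |ξ₁|² + |ξ₂|²)^{(p−2)/2} ≤ c_V |ξ₁ − ξ₂|². -/

import Mathlib

open Set

/-- The auxiliary vector field `V_s(z) = (s² + |z|²)^((p-2)/4) z`. -/
noncomputable def Vfun {n : ℕ} (p s : ℝ) (z : EuclideanSpace ℝ (Fin n)) :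
    EuclideanSpace ℝ (Fin n) :=
  ((s^2 + ‖z‖^2) ^ ((p-2)/4)) • z

open Real
lemma rpow_sub_le_high {a b q : ℝ} (hb : 0 ≤ b) (hba : b ≤ a) (ha : 0 < a) (hq : 1 ≤ q) :
    a^q - b^q ≤ q * a^(q-1) * (a-b) := by
  have h1 : (-1 : ℝ) ≤ b/a - 1 := by
    have : 0 ≤ b/a := div_nonneg hb ha.le
    linarith
  have hber := one_add_mul_self_le_rpow_one_add h1 hq
  have h2 : (1 + (b/a - 1)) = b/a := by ring
  rw [h2] at hber
  have h3 : (b/a)^q = b^q / a^q := Real.div_rpow hb ha.le q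
  have hapos : 0 < a^q := Real.rpow_pos_of_pos ha q
  have h4 : a^(q-1) = a^q / a := by
    rw [Real.rpow_sub_one ha.ne']
  rw [h3] at hber
  -- hber : 1 + q * (b/a - 1) ≤ b^q / a^q
  have h5 : a^q * (1 + q * (b/a - 1)) ≤ b^q := by
    rw [← le_div_iff₀' hapos]; exact hber
  rw [h4]
  have h6 : a^q * (1 + q * (b/a - 1)) = a^q - q * (a^q/a) * (a - b) := by
    field_simp
    ring
  linarith [h6 ▸ h5]

lemma rpow_sub_le_low {a b q : ℝ} (hb : 0 < b) (hba : b ≤ a) (hq0 : 0 ≤ q) (hq1 : q ≤ 1) :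
    a^q - b^q ≤ q * b^(q-1) * (a-b) := by
  have h1 : (-1 : ℝ) ≤ a/b - 1 := by
    have : 0 ≤ a/b := div_nonneg (hb.le.trans hba) hb.le
    linarith
  have hber := rpow_one_add_le_one_add_mul_self h1 hq0 hq1
  have h2 : (1 + (a/b - 1)) = a/b := by ring
  rw [h2] at hber
  have h3 : (a/b)^q = a^q / b^q := Real.div_rpow (hb.le.trans hba) hb.le q
  have hbpos : 0 < b^q := Real.rpow_pos_of_pos hb q
  rw [h3] at hber
  have h5 : a^q ≤ b^q * (1 + q * (a/b - 1)) := by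
    rw [← div_le_iff₀' hbpos]; exact hber
  have h4 : b^(q-1) = b^q / b := Real.rpow_sub_one hb.ne' q
  rw [h4]
  have h6 : b^q * (1 + q * (a/b - 1)) = b^q + q * (b^q/b) * (a - b) := by
    field_simp
  linarith [h6 ▸ h5]

lemma rpow_sub_le_neg {a b q : ℝ} (hb : 0 < b) (hba : b ≤ a) (hq0 : -1 ≤ q) (hq : q ≤ 0) :
    b^q - a^q ≤ (-q) * a^q * (a-b) / b := by
  have ha : 0 < a := lt_of_lt_of_le hb hba
  have key := rpow_sub_le_low hb hba (by linarith : (0:ℝ) ≤ -q) (by linarith : -q ≤ 1)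
  -- key : a^(-q) - b^(-q) ≤ (-q) * b^(-q-1) * (a-b)
  have hbq : b^q = (b^(-q))⁻¹ := by rw [← Real.rpow_neg hb.le, neg_neg]
  have haq : a^q = (a^(-q))⁻¹ := by rw [← Real.rpow_neg ha.le, neg_neg]
  have hbnq : 0 < b^(-q) := Real.rpow_pos_of_pos hb _
  have hanq : 0 < a^(-q) := Real.rpow_pos_of_pos ha _
  have hb1 : b^(-q-1) = b^(-q) / b := Real.rpow_sub_one hb.ne' (-q)
  rw [hb1] at key
  rw [hbq, haq]
  have expand : ((b ^ (-q))⁻¹ - (a ^ (-q))⁻¹) = (a^(-q) - b^(-q)) / (a^(-q) * b^(-q)) := by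
    rw [eq_div_iff (by positivity : (a^(-q) * b^(-q)) ≠ 0)]
    field_simp
  rw [expand]
  rw [div_le_iff₀ (by positivity)]
  have h7 : (-q) * (a^(-q))⁻¹ * (a-b) / b * (a^(-q) * b^(-q)) = ((-q) * (b^(-q)/b) * (a-b)) := by
    field_simp
  rw [h7]
  exact key

lemma rpow_ratio {r u w : ℝ} (hu : 0 < u) (h1 : u ≤ w) (h2 : w ≤ 2*u) :
    ((2:ℝ)^|r|)⁻¹ * w^r ≤ u^r ∧ u^r ≤ (2:ℝ)^|r| * w^r := by
  have hw : 0 < w := lt_of_lt_of_le hu h1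
  have hT1 : (1:ℝ) ≤ (2:ℝ)^|r| := Real.one_le_rpow one_le_two (abs_nonneg r)
  have hT0 : (0:ℝ) < (2:ℝ)^|r| := by positivity
  have hwr : 0 ≤ w^r := Real.rpow_nonneg hw.le r
  have hur : 0 ≤ u^r := Real.rpow_nonneg hu.le r
  rcases le_or_gt 0 r with hr | hr
  · rw [abs_of_nonneg hr]
    have hub : u^r ≤ w^r := Real.rpow_le_rpow hu.le h1 hr
    have hwb : w^r ≤ (2:ℝ)^r * u^r := by
      calc w^r ≤ (2*u)^r := Real.rpow_le_rpow hw.le h2 hr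
        _ = (2:ℝ)^r * u^r := Real.mul_rpow (by norm_num) hu.le
    have h2r1 : (1:ℝ) ≤ (2:ℝ)^r := Real.one_le_rpow one_le_two hr
    constructor
    · rw [inv_mul_le_iff₀ (by positivity)]; exact hwb
    · nlinarith
  · rw [abs_of_neg hr]
    have hub : w^r ≤ u^r := Real.rpow_le_rpow_of_nonpos hu h1 hr.le
    have hinv : ((2:ℝ)^(-r))⁻¹ ≤ 1 := by
      rw [inv_le_one_iff₀]; right; exact Real.one_le_rpow one_le_two (by linarith)
    have h2r1 : (1:ℝ) ≤ (2:ℝ)^(-r) := Real.one_le_rpow one_le_two (by linarith)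
    constructor
    · nlinarith
    · have key : u^r ≤ (w/2)^r :=
        Real.rpow_le_rpow_of_nonpos (by positivity) (by linarith) hr.le
      have hd : (w/2)^r = w^r / (2:ℝ)^r := Real.div_rpow hw.le (by norm_num) r
      have hninv : (2:ℝ)^(-r) = ((2:ℝ)^r)⁻¹ := Real.rpow_neg (by norm_num) r
      have h2rpos : (0:ℝ) < (2:ℝ)^r := Real.rpow_pos_of_pos (by norm_num) r
      rw [hninv]
      rw [hd, div_eq_mul_inv, mul_comm] at key
      exact key

set_option maxHeartbeats 2000000 in
lemma scalar_core (r : ℝ) (hr : -(1/4:ℝ) < r) :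
    ∃ c C : ℝ, 0 < c ∧ c ≤ 1 ∧ 1 ≤ C ∧
      ∀ s x y : ℝ, 0 ≤ s → 0 ≤ x → 0 ≤ y → y ≤ x → 0 < s^2+x^2 →
        (c * (s^2+x^2+y^2)^r * (x-y) ≤ (s^2+x^2)^r * x - (s^2+y^2)^r * y
        ∧ (s^2+x^2)^r * x - (s^2+y^2)^r * y ≤ C * (s^2+x^2+y^2)^r * (x-y)
        ∧ c * (s^2+x^2+y^2)^r * (x+y) ≤ (s^2+x^2)^r * x + (s^2+y^2)^r * y
        ∧ (s^2+x^2)^r * x + (s^2+y^2)^r * y ≤ C * (s^2+x^2+y^2)^r * (x+y)) := by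
  have hT1 : (1:ℝ) ≤ (2:ℝ)^|r| := Real.one_le_rpow one_le_two (abs_nonneg r)
  have hT0 : (0:ℝ) < (2:ℝ)^|r| := by positivity
  set T := (2:ℝ)^|r| with hTdef
  have hTinv0 : 0 < T⁻¹ := by positivity
  have hTinv1 : T⁻¹ ≤ 1 := by
    rw [inv_le_one_iff₀]; right; exact hT1
  have hm0 : 0 < min 1 (1+2*r) := lt_min one_pos (by linarith)
  have hm1 : min 1 (1+2*r) ≤ 1 := min_le_left _ _
  have hc0 : 0 < min 1 (1+2*r) * T⁻¹ / 2 := by positivity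
  have hc1 : min 1 (1+2*r) * T⁻¹ / 2 ≤ 1 := by nlinarith
  have hC1 : (1:ℝ) ≤ (1+|2*r|)*T*2 := by nlinarith [abs_nonneg (2*r)]
  refine ⟨min 1 (1+2*r) * T⁻¹ / 2, (1+|2*r|)*T*2, hc0, hc1, hC1, ?_⟩
  intro s x y hs hx hy hyx hu
  have hv : (0:ℝ) ≤ s^2+y^2 := by positivity
  have hvu : s^2+y^2 ≤ s^2+x^2 := by nlinarith
  have huw : s^2+x^2 ≤ s^2+x^2+y^2 := by nlinarith [sq_nonneg y]
  have hw : (0:ℝ) < s^2+x^2+y^2 := lt_of_lt_of_le hu huw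
  have hw2u : s^2+x^2+y^2 ≤ 2*(s^2+x^2) := by nlinarith
  have hvw : s^2+y^2 ≤ s^2+x^2+y^2 := by nlinarith [sq_nonneg x]
  obtain ⟨hA_low, hA_high⟩ := rpow_ratio (r := r) hu huw hw2u
  rw [← hTdef] at hA_low hA_high
  have hwr0 : 0 ≤ (s^2+x^2+y^2)^r := Real.rpow_nonneg hw.le r
  have hur0 : 0 ≤ (s^2+x^2)^r := Real.rpow_nonneg hu.le r
  have hvr0 : 0 ≤ (s^2+y^2)^r := Real.rpow_nonneg hv r
  -- square roots
  set a := Real.sqrt (s^2+x^2) with hadef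
  set b := Real.sqrt (s^2+y^2) with hbdef
  have ha2 : a^2 = s^2+x^2 := Real.sq_sqrt hu.le
  have hb2 : b^2 = s^2+y^2 := Real.sq_sqrt hv
  have ha : 0 < a := Real.sqrt_pos.2 hu
  have hb0 : 0 ≤ b := Real.sqrt_nonneg _
  have hba : b ≤ a := Real.sqrt_le_sqrt hvu
  have hxa : x ≤ a := by
    have h := Real.sqrt_le_sqrt (show x^2 ≤ s^2+x^2 by nlinarith [sq_nonneg s])
    rwa [Real.sqrt_sq hx] at h
  have hyb : y ≤ b := by
    have h := Real.sqrt_le_sqrt (show y^2 ≤ s^2+y^2 by nlinarith [sq_nonneg s])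
    rwa [Real.sqrt_sq hy] at h
  have hab : a - b ≤ x - y := by
    have hxyab : x + y ≤ a + b := add_le_add hxa hyb
    have h1 : (a-b)*(a+b) ≤ (x-y)*(a+b) := by nlinarith
    exact le_of_mul_le_mul_right h1 (by linarith)
  have haq : a^(2*r) = (s^2+x^2)^r := by
    rw [hadef, Real.sqrt_eq_rpow, ← Real.rpow_mul hu.le]
    congr 1; ring
  have hbq : b^(2*r) = (s^2+y^2)^r := by
    rw [hbdef, Real.sqrt_eq_rpow, ← Real.rpow_mul hv]
    congr 1; ring
  -- plus-lower, common to both sign cases of r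
  have h1pl : T⁻¹*(s^2+x^2+y^2)^r*x ≤ (s^2+x^2)^r*x := mul_le_mul_of_nonneg_right hA_low hx
  have h2pl : 0 ≤ (s^2+y^2)^r*y := mul_nonneg hvr0 hy
  have hplus_low : min 1 (1+2*r) * T⁻¹ / 2 * (s^2+x^2+y^2)^r * (x+y)
      ≤ (s^2+x^2)^r * x + (s^2+y^2)^r * y := by
    linarith [h1pl, h2pl,
      mul_nonneg (mul_nonneg hTinv0.le hwr0) (sub_nonneg.2 hyx),
      mul_nonneg (mul_nonneg (sub_nonneg.2 hm1) hTinv0.le)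
        (mul_nonneg hwr0 (by linarith : (0:ℝ) ≤ x+y))]
  have habne : 0 ≤ a - b := by linarith
  have htriple :
      (min 1 (1+2*r) * T⁻¹ / 2 * (s^2+x^2+y^2)^r * (x-y) ≤ (s^2+x^2)^r * x - (s^2+y^2)^r * y)
      ∧ ((s^2+x^2)^r * x - (s^2+y^2)^r * y ≤ (1+|2*r|)*T*2 * (s^2+x^2+y^2)^r * (x-y))
      ∧ ((s^2+x^2)^r * x + (s^2+y^2)^r * y ≤ (1+|2*r|)*T*2 * (s^2+x^2+y^2)^r * (x+y)) := by
    rcases le_or_gt 0 r with hr0 | hr0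
    · -- CASE 0 ≤ r
      have habs : |2*r| = 2*r := abs_of_nonneg (by linarith)
      rw [habs]
      have hBA : (s^2+y^2)^r ≤ (s^2+x^2)^r := Real.rpow_le_rpow hv hvu hr0
      have hvw_r : (s^2+y^2)^r ≤ (s^2+x^2+y^2)^r := Real.rpow_le_rpow hv hvw hr0
      have haux : ((s^2+x^2)^r - (s^2+y^2)^r) * y ≤ 2*r*((s^2+x^2)^r*(x-y)) := by
        rcases eq_or_lt_of_le hv with hv0 | hvpos
        · have hy2 : y^2 = 0 := by linarith [sq_nonneg s, sq_nonneg y]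
          have hy0 : y = 0 := pow_eq_zero_iff two_ne_zero |>.1 hy2
          rw [hy0]
          simp only [mul_zero, sub_zero]
          exact mul_nonneg (by linarith) (mul_nonneg hur0 (by linarith))
        · have hbpos : 0 < b := Real.sqrt_pos.2 hvpos
          rcases le_or_gt r (1/2) with hrhalf | hrhalf
          · have key := rpow_sub_le_low hbpos hba
              (by linarith : (0:ℝ) ≤ 2*r) (by linarith : 2*r ≤ 1)
            rw [haq, hbq] at key
            have hbq1 : b^(2*r-1) = (s^2+y^2)^r / b := by
              rw [Real.rpow_sub_one hbpos.ne', hbq]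
            rw [hbq1] at key
            have e1 : ((s^2+x^2)^r - (s^2+y^2)^r) * y
                ≤ (2*r*((s^2+y^2)^r/b)*(a-b)) * y := mul_le_mul_of_nonneg_right key hy
            have epos : 0 ≤ 2*r*((s^2+y^2)^r/b)*(a-b) :=
              mul_nonneg (mul_nonneg (by linarith) (div_nonneg hvr0 hbpos.le)) habne
            have e2 : (2*r*((s^2+y^2)^r/b)*(a-b)) * y
                ≤ (2*r*((s^2+y^2)^r/b)*(a-b)) * b := mul_le_mul_of_nonneg_left hyb epos
            have e3 : (2*r*((s^2+y^2)^r/b)*(a-b)) * b = 2*r*((s^2+y^2)^r*(a-b)) := by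
              field_simp
              try ring
            have e40 : (s^2+y^2)^r*(a-b) ≤ (s^2+x^2)^r*(x-y) :=
              mul_le_mul hBA hab habne hur0
            have e4 : 2*r*((s^2+y^2)^r*(a-b)) ≤ 2*r*((s^2+x^2)^r*(x-y)) := by
              linarith [mul_nonneg (by linarith : (0:ℝ) ≤ 2*r) (sub_nonneg.2 e40)]
            linarith [e3.le, e3.ge]
          · have key := rpow_sub_le_high hb0 hba ha (by linarith : (1:ℝ) ≤ 2*r)
            rw [haq, hbq] at key
            have haq1 : a^(2*r-1) = (s^2+x^2)^r / a := by
              rw [Real.rpow_sub_one ha.ne', haq]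
            rw [haq1] at key
            have e1 : ((s^2+x^2)^r - (s^2+y^2)^r) * y
                ≤ (2*r*((s^2+x^2)^r/a)*(a-b)) * y := mul_le_mul_of_nonneg_right key hy
            have epos : 0 ≤ 2*r*((s^2+x^2)^r/a)*(a-b) :=
              mul_nonneg (mul_nonneg (by linarith) (div_nonneg hur0 ha.le)) habne
            have e2 : (2*r*((s^2+x^2)^r/a)*(a-b)) * y
                ≤ (2*r*((s^2+x^2)^r/a)*(a-b)) * a :=
              mul_le_mul_of_nonneg_left (by linarith : y ≤ a) epos
            have e3 : (2*r*((s^2+x^2)^r/a)*(a-b)) * a = 2*r*((s^2+x^2)^r*(a-b)) := by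
              field_simp
              try ring
            have e40 : (s^2+x^2)^r*(a-b) ≤ (s^2+x^2)^r*(x-y) :=
              mul_le_mul_of_nonneg_left hab hur0
            have e4 : 2*r*((s^2+x^2)^r*(a-b)) ≤ 2*r*((s^2+x^2)^r*(x-y)) := by
              linarith [mul_nonneg (by linarith : (0:ℝ) ≤ 2*r) (sub_nonneg.2 e40)]
            linarith [e3.le, e3.ge]
      refine ⟨?_, ?_, ?_⟩
      · -- minus lower
        have h1 : T⁻¹*(s^2+x^2+y^2)^r*(x-y) ≤ (s^2+x^2)^r*(x-y) :=
          mul_le_mul_of_nonneg_right hA_low (sub_nonneg.2 hyx)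
        have h2 : (s^2+y^2)^r*y ≤ (s^2+x^2)^r*y := mul_le_mul_of_nonneg_right hBA hy
        linarith [h1, h2,
          mul_nonneg (mul_nonneg hTinv0.le
            (by linarith : (0:ℝ) ≤ 1 - min 1 (1+2*r)/2))
            (mul_nonneg hwr0 (sub_nonneg.2 hyx))]
      · -- minus upper
        have h1 : (s^2+x^2)^r*(x-y) ≤ T*(s^2+x^2+y^2)^r*(x-y) :=
          mul_le_mul_of_nonneg_right hA_high (sub_nonneg.2 hyx)
        have h3 : (s^2+x^2)^r*x - (s^2+y^2)^r*y ≤ (1+2*r)*((s^2+x^2)^r*(x-y)) := by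
          linarith [haux]
        have h4 : (1+2*r)*((s^2+x^2)^r*(x-y)) ≤ (1+2*r)*(T*(s^2+x^2+y^2)^r*(x-y)) :=
          mul_le_mul_of_nonneg_left h1 (by linarith)
        have h5 : (1+2*r)*(T*(s^2+x^2+y^2)^r*(x-y))
            ≤ (1+2*r)*T*2*(s^2+x^2+y^2)^r*(x-y) := by
          linarith [mul_nonneg (mul_nonneg (by linarith : (0:ℝ) ≤ 1+2*r) hT0.le)
            (mul_nonneg hwr0 (sub_nonneg.2 hyx))]
        linarith
      · -- plus upper
        have h1 : (s^2+x^2)^r*x ≤ T*(s^2+x^2+y^2)^r*x :=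
          mul_le_mul_of_nonneg_right hA_high hx
        have h2 : (s^2+y^2)^r*y ≤ T*(s^2+x^2+y^2)^r*y := by
          linarith [mul_le_mul_of_nonneg_right hvw_r hy,
            mul_nonneg (mul_nonneg (by linarith : (0:ℝ) ≤ T - 1) hwr0) hy]
        linarith [h1, h2,
          mul_nonneg (mul_nonneg (by linarith : (0:ℝ) ≤ 1+4*r) hT0.le)
            (mul_nonneg hwr0 (by linarith : (0:ℝ) ≤ x+y))]
    · -- CASE r < 0
      have habs : |2*r| = -(2*r) := abs_of_neg (by linarith)
      rw [habs]
      rcases eq_or_lt_of_le hv with hv0 | hvpos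
      · -- s^2+y^2 = 0 : s = 0, y = 0
        have hy0 : y = 0 := by
          have hy2 : y^2 = 0 := by linarith [sq_nonneg s, sq_nonneg y]
          exact pow_eq_zero_iff two_ne_zero |>.1 hy2
        have hs0 : s = 0 := by
          have hs2 : s^2 = 0 := by linarith [sq_nonneg s, sq_nonneg y]
          exact pow_eq_zero_iff two_ne_zero |>.1 hs2
        subst hy0; subst hs0
        have hwu : ((0:ℝ)^2+x^2+0^2) = ((0:ℝ)^2+x^2) := by ring
        have hvz : (((0:ℝ)^2+0^2):ℝ)^r = 0 := by
          rw [show ((0:ℝ)^2+(0:ℝ)^2) = (0:ℝ) by norm_num, Real.zero_rpow (by linarith : r ≠ 0)]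
        rw [hwu, hvz]
        have hx0 : 0 ≤ ((0:ℝ)^2+x^2)^r * x := mul_nonneg hur0 hx
        refine ⟨?_, ?_, ?_⟩
        · linarith [mul_nonneg (mul_nonneg (by linarith : (0:ℝ) ≤ 1 - min 1 (1+2*r) * T⁻¹ / 2) hur0) hx]
        · have h1T : (1:ℝ)*1 ≤ (1+ -(2*r))*T :=
            mul_le_mul (by linarith) hT1 zero_le_one (by linarith)
          linarith [mul_nonneg (mul_nonneg (by linarith : (0:ℝ) ≤ (1+ -(2*r))*T*2 - 1) hur0) hx]
        · have h1T : (1:ℝ)*1 ≤ (1+ -(2*r))*T :=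
            mul_le_mul (by linarith) hT1 zero_le_one (by linarith)
          linarith [mul_nonneg (mul_nonneg (by linarith : (0:ℝ) ≤ (1+ -(2*r))*T*2 - 1) hur0) hx]
      · -- s^2+y^2 > 0
        have hbpos : 0 < b := Real.sqrt_pos.2 hvpos
        have hAB : (s^2+x^2)^r ≤ (s^2+y^2)^r :=
          Real.rpow_le_rpow_of_nonpos hvpos hvu hr0.le
        have key := rpow_sub_le_neg hbpos hba (by linarith : (-1:ℝ) ≤ 2*r)
          (by linarith : 2*r ≤ 0)
        rw [haq, hbq] at key
        -- key : v^r - u^r ≤ -(2r) * u^r * (a-b) / b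
        have e1 : ((s^2+y^2)^r - (s^2+x^2)^r) * y
            ≤ (-(2*r) * (s^2+x^2)^r * (a-b) / b) * y := mul_le_mul_of_nonneg_right key hy
        have epos : 0 ≤ -(2*r) * (s^2+x^2)^r * (a-b) / b :=
          div_nonneg (mul_nonneg (mul_nonneg (by linarith) hur0) habne) hbpos.le
        have e2 : (-(2*r) * (s^2+x^2)^r * (a-b) / b) * y
            ≤ (-(2*r) * (s^2+x^2)^r * (a-b) / b) * b := mul_le_mul_of_nonneg_left hyb epos
        have e3 : (-(2*r) * (s^2+x^2)^r * (a-b) / b) * b = -(2*r)*((s^2+x^2)^r*(a-b)) := by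
          field_simp
          try ring
        have e40 : (s^2+x^2)^r*(a-b) ≤ (s^2+x^2)^r*(x-y) :=
          mul_le_mul_of_nonneg_left hab hur0
        have e4 : -(2*r)*((s^2+x^2)^r*(a-b)) ≤ -(2*r)*((s^2+x^2)^r*(x-y)) := by
          linarith [mul_nonneg (by linarith : (0:ℝ) ≤ -(2*r)) (sub_nonneg.2 e40)]
        refine ⟨?_, ?_, ?_⟩
        · -- minus lower
          have hmm : min 1 (1+2*r) = 1+2*r := min_eq_right (by linarith)
          rw [hmm]
          have h1 : T⁻¹*(s^2+x^2+y^2)^r*(x-y) ≤ (s^2+x^2)^r*(x-y) :=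
            mul_le_mul_of_nonneg_right hA_low (sub_nonneg.2 hyx)
          have h2 : (1+2*r)*(T⁻¹*(s^2+x^2+y^2)^r*(x-y)) ≤ (1+2*r)*((s^2+x^2)^r*(x-y)) :=
            mul_le_mul_of_nonneg_left h1 (by linarith)
          linarith [e1, e2, e3.le, e3.ge, e4, h2,
            mul_nonneg (mul_nonneg (by linarith : (0:ℝ) ≤ 1+2*r) hTinv0.le)
              (mul_nonneg hwr0 (sub_nonneg.2 hyx))]
        · -- minus upper
          have h0 : ((s^2+x^2)^r - (s^2+y^2)^r) * y ≤ 0 :=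
            mul_nonpos_of_nonpos_of_nonneg (by linarith) hy
          have h1 : (s^2+x^2)^r*(x-y) ≤ T*(s^2+x^2+y^2)^r*(x-y) :=
            mul_le_mul_of_nonneg_right hA_high (sub_nonneg.2 hyx)
          linarith [h0, h1,
            mul_nonneg (mul_nonneg (by linarith :
              (0:ℝ) ≤ (1+ -(2*r))*2 - 1) hT0.le)
              (mul_nonneg hwr0 (sub_nonneg.2 hyx))]
        · -- plus upper
          have h1 : (s^2+x^2)^r*x ≤ T*(s^2+x^2+y^2)^r*x :=
            mul_le_mul_of_nonneg_right hA_high hx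
          rcases le_or_gt (s^2+x^2+y^2) (2*(s^2+y^2)) with hcase | hcase
          · have h2 := (rpow_ratio (r := r) hvpos hvw hcase).2
            rw [← hTdef] at h2
            have h2' : (s^2+y^2)^r*y ≤ T*(s^2+x^2+y^2)^r*y :=
              mul_le_mul_of_nonneg_right h2 hy
            linarith [h1, h2',
              mul_nonneg (mul_nonneg (by linarith : (0:ℝ) ≤ -(2*r)) hT0.le)
                (mul_nonneg hwr0 (by linarith : (0:ℝ) ≤ x+y)),
              mul_nonneg hT0.le (mul_nonneg hwr0 (by linarith : (0:ℝ) ≤ x+y))]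
          · have hx2 : (s^2+y^2) < x^2 := by linarith
            have hx2pos : 0 < x^2 := lt_of_le_of_lt hv hx2
            have st1 : (s^2+y^2)^r * y ≤ (s^2+y^2)^r * b := mul_le_mul_of_nonneg_left hyb hvr0
            have st2 : (s^2+y^2)^r * b = (s^2+y^2)^(r+1/2) := by
              rw [hbdef, Real.sqrt_eq_rpow, ← Real.rpow_add hvpos]
            have st3 : (s^2+y^2)^(r+1/2) ≤ (x^2)^(r+1/2) :=
              Real.rpow_le_rpow hv hx2.le (by linarith)
            have st4 : (x^2)^(r+1/2) = (x^2)^r * x := by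
              rw [Real.rpow_add hx2pos, ← Real.sqrt_eq_rpow, Real.sqrt_sq hx]
            have st5 := (rpow_ratio (r := r) hx2pos
              (by linarith [sq_nonneg s, sq_nonneg y] : x^2 ≤ s^2+x^2+y^2)
              (by linarith : s^2+x^2+y^2 ≤ 2*x^2)).2
            rw [← hTdef] at st5
            have st6 : (x^2)^r * x ≤ T*(s^2+x^2+y^2)^r*x :=
              mul_le_mul_of_nonneg_right st5 hx
            linarith [st1, st2.le, st2.ge, st3, st4.le, st4.ge, st6, h1,
              mul_nonneg (mul_nonneg hT0.le hwr0) hy,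
              mul_nonneg (mul_nonneg (by linarith : (0:ℝ) ≤ -(2*r)) hT0.le)
                (mul_nonneg hwr0 (by linarith : (0:ℝ) ≤ x+y))]
  exact ⟨htriple.1, htriple.2.1, hplus_low, htriple.2.2⟩

lemma combine_tau {A B x y t W2 c C : ℝ} (hx : 0 ≤ x) (hy : 0 ≤ y) (hyx : y ≤ x)
    (ht1 : t ≤ x*y) (ht2 : -(x*y) ≤ t)
    (hm1 : c*W2*(x-y) ≤ A*x - B*y) (hm2 : A*x - B*y ≤ C*W2*(x-y))
    (hp1 : c*W2*(x+y) ≤ A*x + B*y) (hp2 : A*x + B*y ≤ C*W2*(x+y))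
    (hcm : 0 ≤ c*W2*(x-y)) (hcp : 0 ≤ c*W2*(x+y)) :
    c^2*W2^2*(x^2 - 2*t + y^2) ≤ A^2*x^2 + B^2*y^2 - 2*(A*B*t) ∧
    A^2*x^2 + B^2*y^2 - 2*(A*B*t) ≤ C^2*W2^2*(x^2 - 2*t + y^2) := by
  have h0m : 0 ≤ A*x - B*y := le_trans hcm hm1
  have h0p : 0 ≤ A*x + B*y := le_trans hcp hp1
  have hSm_low : (c*W2*(x-y))^2 ≤ (A*x-B*y)^2 := pow_le_pow_left₀ hcm hm1 2
  have hSm_high : (A*x-B*y)^2 ≤ (C*W2*(x-y))^2 := pow_le_pow_left₀ h0m hm2 2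
  have hSp_low : (c*W2*(x+y))^2 ≤ (A*x+B*y)^2 := pow_le_pow_left₀ hcp hp1 2
  have hSp_high : (A*x+B*y)^2 ≤ (C*W2*(x+y))^2 := pow_le_pow_left₀ h0p hp2 2
  rcases eq_or_lt_of_le (mul_nonneg hx hy) with hxy0 | hxy0
  · have hy0 : y = 0 := by
      rcases mul_eq_zero.1 hxy0.symm with h | h
      · linarith
      · exact h
    subst hy0
    rw [mul_zero] at ht1 ht2
    have ht0 : t = 0 := le_antisymm ht1 (by linarith)
    subst ht0
    constructor
    · nlinarith [hSm_low]
    · nlinarith [hSm_high]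
  · have h2xy : (0:ℝ) < 2*(x*y) := by linarith
    constructor
    · have c1 : 0 ≤ (x*y + t) * ((A*x-B*y)^2 - (c*W2*(x-y))^2) :=
        mul_nonneg (by linarith) (by linarith)
      have c2 : 0 ≤ (x*y - t) * ((A*x+B*y)^2 - (c*W2*(x+y))^2) :=
        mul_nonneg (by linarith) (by linarith)
      have key : 0 ≤ 2*(x*y) *
          ((A^2*x^2 + B^2*y^2 - 2*(A*B*t)) - c^2*W2^2*(x^2 - 2*t + y^2)) := by
        nlinarith [c1, c2]
      linarith [(mul_nonneg_iff_of_pos_left h2xy).mp key]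
    · have c1 : 0 ≤ (x*y + t) * ((C*W2*(x-y))^2 - (A*x-B*y)^2) :=
        mul_nonneg (by linarith) (by linarith)
      have c2 : 0 ≤ (x*y - t) * ((C*W2*(x+y))^2 - (A*x+B*y)^2) :=
        mul_nonneg (by linarith) (by linarith)
      have key : 0 ≤ 2*(x*y) *
          (C^2*W2^2*(x^2 - 2*t + y^2) - (A^2*x^2 + B^2*y^2 - 2*(A*B*t))) := by
        nlinarith [c1, c2]
      linarith [(mul_nonneg_iff_of_pos_left h2xy).mp key]

open Set in
set_option maxHeartbeats 1000000 in
lemma main_aux (n : ℕ) (p : ℝ) (c C : ℝ) (hc0 : 0 < c) (hC1 : 1 ≤ C)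
    (hcore : ∀ s x y : ℝ, 0 ≤ s → 0 ≤ x → 0 ≤ y → y ≤ x → 0 < s^2+x^2 →
      (c * (s^2+x^2+y^2)^((p-2)/4) * (x-y) ≤ (s^2+x^2)^((p-2)/4) * x - (s^2+y^2)^((p-2)/4) * y
      ∧ (s^2+x^2)^((p-2)/4) * x - (s^2+y^2)^((p-2)/4) * y ≤ C * (s^2+x^2+y^2)^((p-2)/4) * (x-y)
      ∧ c * (s^2+x^2+y^2)^((p-2)/4) * (x+y) ≤ (s^2+x^2)^((p-2)/4) * x + (s^2+y^2)^((p-2)/4) * y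
      ∧ (s^2+x^2)^((p-2)/4) * x + (s^2+y^2)^((p-2)/4) * y ≤ C * (s^2+x^2+y^2)^((p-2)/4) * (x+y)))
    (s : ℝ) (hs : s ∈ Icc (0:ℝ) 1) (ξ₁ ξ₂ : EuclideanSpace ℝ (Fin n))
    (h0 : s = 0 → ¬(ξ₁ = 0 ∧ ξ₂ = 0)) (hord : ‖ξ₂‖ ≤ ‖ξ₁‖) :
    (1/(max (C^2) (c^2)⁻¹)) * ‖ξ₁ - ξ₂‖^2
      ≤ ‖Vfun p s ξ₁ - Vfun p s ξ₂‖^2 / (s^2 + ‖ξ₁‖^2 + ‖ξ₂‖^2) ^ ((p-2)/2)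
    ∧ ‖Vfun p s ξ₁ - Vfun p s ξ₂‖^2 / (s^2 + ‖ξ₁‖^2 + ‖ξ₂‖^2) ^ ((p-2)/2)
      ≤ (max (C^2) (c^2)⁻¹) * ‖ξ₁ - ξ₂‖^2 := by
  obtain ⟨hs0, -⟩ := hs
  have hx : (0:ℝ) ≤ ‖ξ₁‖ := norm_nonneg _
  have hy : (0:ℝ) ≤ ‖ξ₂‖ := norm_nonneg _
  have hw : (0:ℝ) < s^2 + ‖ξ₁‖^2 + ‖ξ₂‖^2 := by
    rcases eq_or_lt_of_le hs0 with h | h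
    · have hx1 : ξ₁ ≠ 0 := by
        intro hz
        refine h0 h.symm ⟨hz, ?_⟩
        have : ‖ξ₂‖ ≤ 0 := by rw [hz, norm_zero] at hord; exact hord
        exact norm_eq_zero.1 (le_antisymm this hy)
      have h1 : 0 < ‖ξ₁‖ := norm_pos_iff.2 hx1
      nlinarith [sq_nonneg s, sq_nonneg ‖ξ₂‖]
    · nlinarith [sq_nonneg ‖ξ₁‖, sq_nonneg ‖ξ₂‖]
  have hy2x2 : ‖ξ₂‖^2 ≤ ‖ξ₁‖^2 := pow_le_pow_left₀ hy hord 2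
  have hu : (0:ℝ) < s^2 + ‖ξ₁‖^2 := by linarith [sq_nonneg s]
  obtain ⟨m1, m2, p1, p2⟩ := hcore s ‖ξ₁‖ ‖ξ₂‖ hs0 hx hy hord hu
  have hA0 : (0:ℝ) ≤ (s^2+‖ξ₁‖^2)^((p-2)/4) := Real.rpow_nonneg (by positivity) _
  have hB0 : (0:ℝ) ≤ (s^2+‖ξ₂‖^2)^((p-2)/4) := Real.rpow_nonneg (by positivity) _
  have hW2 : (0:ℝ) < (s^2+‖ξ₁‖^2+‖ξ₂‖^2)^((p-2)/4) := Real.rpow_pos_of_pos hw _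
  have hcm : 0 ≤ c*(s^2+‖ξ₁‖^2+‖ξ₂‖^2)^((p-2)/4)*(‖ξ₁‖-‖ξ₂‖) :=
    mul_nonneg (mul_nonneg hc0.le hW2.le) (sub_nonneg.2 hord)
  have hcp : 0 ≤ c*(s^2+‖ξ₁‖^2+‖ξ₂‖^2)^((p-2)/4)*(‖ξ₁‖+‖ξ₂‖) :=
    mul_nonneg (mul_nonneg hc0.le hW2.le) (by linarith)
  have htau := abs_real_inner_le_norm ξ₁ ξ₂
  have ht1 : (inner ℝ ξ₁ ξ₂ : ℝ) ≤ ‖ξ₁‖*‖ξ₂‖ := (abs_le.1 htau).2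
  have ht2 : -(‖ξ₁‖*‖ξ₂‖) ≤ (inner ℝ ξ₁ ξ₂ : ℝ) := (abs_le.1 htau).1
  obtain ⟨E_low, E_high⟩ := combine_tau hx hy hord ht1 ht2 m1 m2 p1 p2 hcm hcp
  have hVfun : Vfun p s ξ₁ - Vfun p s ξ₂
      = ((s^2+‖ξ₁‖^2)^((p-2)/4)) • ξ₁ - ((s^2+‖ξ₂‖^2)^((p-2)/4)) • ξ₂ := rfl
  have hE : ‖Vfun p s ξ₁ - Vfun p s ξ₂‖^2
      = ((s^2+‖ξ₁‖^2)^((p-2)/4))^2*‖ξ₁‖^2 + ((s^2+‖ξ₂‖^2)^((p-2)/4))^2*‖ξ₂‖^2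
        - 2*(((s^2+‖ξ₁‖^2)^((p-2)/4))*((s^2+‖ξ₂‖^2)^((p-2)/4))*(inner ℝ ξ₁ ξ₂ : ℝ)) := by
    rw [hVfun, norm_sub_sq_real, norm_smul, norm_smul, real_inner_smul_left,
      real_inner_smul_right, Real.norm_eq_abs, Real.norm_eq_abs,
      abs_of_nonneg hA0, abs_of_nonneg hB0]
    ring
  have hN : ‖ξ₁ - ξ₂‖^2 = ‖ξ₁‖^2 - 2*(inner ℝ ξ₁ ξ₂ : ℝ) + ‖ξ₂‖^2 := by
    rw [norm_sub_sq_real]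
  have hN0 : (0:ℝ) ≤ ‖ξ₁‖^2 - 2*(inner ℝ ξ₁ ξ₂ : ℝ) + ‖ξ₂‖^2 := by
    rw [← hN]; positivity
  have hW2sq : ((s^2+‖ξ₁‖^2+‖ξ₂‖^2)^((p-2)/4))^2 = (s^2+‖ξ₁‖^2+‖ξ₂‖^2)^((p-2)/2) := by
    rw [← Real.rpow_natCast ((s^2+‖ξ₁‖^2+‖ξ₂‖^2)^((p-2)/4)) 2, ← Real.rpow_mul hw.le]
    congr 1
    push_cast; ring
  have hWpos : (0:ℝ) < (s^2+‖ξ₁‖^2+‖ξ₂‖^2)^((p-2)/2) := Real.rpow_pos_of_pos hw _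
  set cV := max (C^2) ((c^2)⁻¹) with hcVdef
  have hcV1 : (c^2)⁻¹ ≤ cV := le_max_right _ _
  have hcV2 : C^2 ≤ cV := le_max_left _ _
  have hcVpos : 0 < cV := lt_of_lt_of_le (by positivity) hcV1
  have h1cV : 1/cV ≤ c^2 := by
    rw [div_le_iff₀ hcVpos]
    calc (1:ℝ) = c^2 * (c^2)⁻¹ := by field_simp
      _ ≤ c^2 * cV := mul_le_mul_of_nonneg_left hcV1 (by positivity)
  constructor
  · rw [le_div_iff₀ hWpos, hE, hN]
    have step : 1/cV * (‖ξ₁‖^2 - 2*(inner ℝ ξ₁ ξ₂ : ℝ) + ‖ξ₂‖^2)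
        ≤ c^2 * (‖ξ₁‖^2 - 2*(inner ℝ ξ₁ ξ₂ : ℝ) + ‖ξ₂‖^2) :=
      mul_le_mul_of_nonneg_right h1cV hN0
    have step2 : 1/cV * (‖ξ₁‖^2 - 2*(inner ℝ ξ₁ ξ₂ : ℝ) + ‖ξ₂‖^2) * (s^2+‖ξ₁‖^2+‖ξ₂‖^2)^((p-2)/2)
        ≤ c^2 * (‖ξ₁‖^2 - 2*(inner ℝ ξ₁ ξ₂ : ℝ) + ‖ξ₂‖^2) * (s^2+‖ξ₁‖^2+‖ξ₂‖^2)^((p-2)/2) :=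
      mul_le_mul_of_nonneg_right step hWpos.le
    rw [hW2sq] at E_low
    linarith [E_low, step2]
  · rw [div_le_iff₀ hWpos, hE, hN]
    have step : C^2 * (‖ξ₁‖^2 - 2*(inner ℝ ξ₁ ξ₂ : ℝ) + ‖ξ₂‖^2)
        ≤ cV * (‖ξ₁‖^2 - 2*(inner ℝ ξ₁ ξ₂ : ℝ) + ‖ξ₂‖^2) :=
      mul_le_mul_of_nonneg_right hcV2 hN0
    have step2 : C^2 * (‖ξ₁‖^2 - 2*(inner ℝ ξ₁ ξ₂ : ℝ) + ‖ξ₂‖^2) * (s^2+‖ξ₁‖^2+‖ξ₂‖^2)^((p-2)/2)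
        ≤ cV * (‖ξ₁‖^2 - 2*(inner ℝ ξ₁ ξ₂ : ℝ) + ‖ξ₂‖^2) * (s^2+‖ξ₁‖^2+‖ξ₂‖^2)^((p-2)/2) :=
      mul_le_mul_of_nonneg_right step hWpos.le
    rw [hW2sq] at E_high
    linarith [E_high, step2]

/-- Two-sided comparison between the `V`-function difference and the weighted distance. -/
theorem V_function_comparison (n : ℕ) (p : ℝ) (hp : 1 < p) :
    ∃ cV : ℝ, 1 ≤ cV ∧
      ∀ s : ℝ, s ∈ Icc (0:ℝ) 1 →
        ∀ ξ₁ ξ₂ : EuclideanSpace ℝ (Fin n), (s = 0 → ¬(ξ₁ = 0 ∧ ξ₂ = 0)) →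
          (1/cV) * ‖ξ₁ - ξ₂‖^2
              ≤ ‖Vfun p s ξ₁ - Vfun p s ξ₂‖^2 / (s^2 + ‖ξ₁‖^2 + ‖ξ₂‖^2) ^ ((p-2)/2) ∧
            ‖Vfun p s ξ₁ - Vfun p s ξ₂‖^2 / (s^2 + ‖ξ₁‖^2 + ‖ξ₂‖^2) ^ ((p-2)/2)
              ≤ cV * ‖ξ₁ - ξ₂‖^2 := by
  have hr : -(1/4:ℝ) < (p-2)/4 := by linarith
  obtain ⟨c, C, hc0, hc1, hC1, hcore⟩ := scalar_core ((p-2)/4) hr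
  refine ⟨max (C^2) ((c^2)⁻¹), ?_, ?_⟩
  · calc (1:ℝ) ≤ C^2 := by nlinarith
      _ ≤ _ := le_max_left _ _
  intro s hs ξ₁ ξ₂ h0
  rcases le_total ‖ξ₂‖ ‖ξ₁‖ with hord | hord
  · exact main_aux n p c C hc0 hC1 hcore s hs ξ₁ ξ₂ h0 hord
  · have h0' : s = 0 → ¬(ξ₂ = 0 ∧ ξ₁ = 0) := by
      intro hs0 h
      exact h0 hs0 ⟨h.2, h.1⟩
    have key := main_aux n p c C hc0 hC1 hcore s hs ξ₂ ξ₁ h0' hord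
    have e1 : ‖ξ₂ - ξ₁‖ = ‖ξ₁ - ξ₂‖ := norm_sub_rev _ _
    have e2 : ‖Vfun p s ξ₂ - Vfun p s ξ₁‖ = ‖Vfun p s ξ₁ - Vfun p s ξ₂‖ := norm_sub_rev _ _
    have e3 : s^2 + ‖ξ₂‖^2 + ‖ξ₁‖^2 = s^2 + ‖ξ₁‖^2 + ‖ξ₂‖^2 := by ring
    rw [e1, e2, e3] at key
    exact key
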